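/- Every pseudo-path-decomposition (B_1, ..., B_n) of a graph G in which each bag has size at most w+1 yields a path-decomposition of G of width at most w+1: the sequence (B_1, B_1 ∪ B_2 minus appropriate vertices, ..., B_n) obtained by inserting, for each edge uv witnessed only by consecutive bags B_i, B_{i+1} with B_i \ B_{i+1} = {u} and B_{i+1} \ B_i = {v}, the bag B_i ∪ {v} between B_i and B_{i+1}, is a path-decomposition of G of width at most w+1. In particular, path-width is at most pseudo-path-width plus one. -/

import Mathlib

open SimpleGraph Set

/-- `φ` is an `(L,C)`-quasi-isometry from `G` to `H`. -/
def IsQuasiIsometry {V W : Type} (G : SimpleGraph V) (H : SimpleGraph W)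
    (L C : ℕ) (φ : V → W) : Prop :=
  (∀ u v : V, G.edist u v ≠ ⊤ →
      H.edist (φ u) (φ v) ≤ L * G.edist u v + C) ∧
  (∀ u v : V, H.edist (φ u) (φ v) ≠ ⊤ →
      G.edist u v ≤ L * H.edist (φ u) (φ v) + C) ∧
  (∀ y : W, ∃ v : V, H.edist (φ v) y ≤ C)

/-- `(T, B)` is a tree-decomposition of `G`. -/
structure IsTreeDecomp {V τ : Type} (G : SimpleGraph V) (T : SimpleGraph τ)
    (B : τ → Set V) : Prop where
  isTree : T.IsTree
  covers : ∀ v : V, ∃ t, v ∈ B t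
  edges : ∀ u v : V, G.Adj u v → ∃ t, u ∈ B t ∧ v ∈ B t
  interp : ∀ t₁ t₂ t₃ : τ, ∀ p : T.Walk t₁ t₃, p.IsPath → t₂ ∈ p.support →
    B t₁ ∩ B t₃ ⊆ B t₂

/-- `(T, B)` is a pseudo-tree-decomposition of `G`. -/
structure IsPseudoTreeDecomp {V τ : Type} (G : SimpleGraph V) (T : SimpleGraph τ)
    (B : τ → Set V) : Prop where
  isTree : T.IsTree
  covers : ∀ v : V, ∃ t, v ∈ B t
  edges : ∀ u v : V, G.Adj u v → (∃ t, u ∈ B t ∧ v ∈ B t) ∨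
    (∃ s t, T.Adj s t ∧ B s \ B t = {u} ∧ B t \ B s = {v})
  interp : ∀ t₁ t₂ t₃ : τ, ∀ p : T.Walk t₁ t₃, p.IsPath → t₂ ∈ p.support →
    B t₁ ∩ B t₃ ⊆ B t₂

/-- `(B 0, …, B (n-1))` is a pseudo-path-decomposition of `G`. -/
structure IsPseudoPathDecomp {V : Type} (G : SimpleGraph V) {n : ℕ}
    (B : Fin n → Set V) : Prop where
  covers : ∀ v : V, ∃ i, v ∈ B i
  edges : ∀ u v : V, G.Adj u v → (∃ i, u ∈ B i ∧ v ∈ B i) ∨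
    (∃ i : Fin n, ∃ hi : i.1 + 1 < n,
      B i \ B ⟨i.1 + 1, hi⟩ = {u} ∧ B ⟨i.1 + 1, hi⟩ \ B i = {v})
  interp : ∀ i j l : Fin n, i ≤ j → j ≤ l → B i ∩ B l ⊆ B j

/-- `(B 0, …, B (n-1))` is a path-decomposition of `G`. -/
structure IsPathDecomp {V : Type} (G : SimpleGraph V) {n : ℕ}
    (B : Fin n → Set V) : Prop where
  covers : ∀ v : V, ∃ i, v ∈ B i
  edges : ∀ u v : V, G.Adj u v → ∃ i, u ∈ B i ∧ v ∈ B i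
  interp : ∀ i j l : Fin n, i ≤ j → j ≤ l → B i ∩ B l ⊆ B j

/-- `G` has a tree-decomposition in which every bag has at most `k` vertices
(i.e. tree-width at most `k - 1`). -/
def TreewidthBagLE {V : Type} (G : SimpleGraph V) (k : ℕ) : Prop :=
  ∃ (τ : Type) (T : SimpleGraph τ) (B : τ → Set V),
    IsTreeDecomp G T B ∧ ∀ t, (B t).encard ≤ k

/-- `G` has a pseudo-tree-decomposition in which every bag has at most `k` vertices
(i.e. pseudo-tree-width at most `k - 1`). -/
def PseudoTreewidthBagLE {V : Type} (G : SimpleGraph V) (k : ℕ) : Prop :=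
  ∃ (τ : Type) (T : SimpleGraph τ) (B : τ → Set V),
    IsPseudoTreeDecomp G T B ∧ ∀ t, (B t).encard ≤ k

theorem stmt17 {V : Type} (G : SimpleGraph V) (w n : ℕ) (B : Fin n → Set V)
    (hdec : IsPseudoPathDecomp G B) (hwid : ∀ i, (B i).encard ≤ w + 1) :
    ∃ (m : ℕ) (D : Fin m → Set V),
      IsPathDecomp G D ∧ ∀ i, (D i).encard ≤ w + 2 := by
  classical
  set B' : ℕ → Set V := fun i => if h : i < n then B ⟨i, h⟩ else ∅ with hB'
  have hB'int : ∀ i j l : ℕ, i ≤ j → j ≤ l → B' i ∩ B' l ⊆ B' j := by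
    intro i j l hij hjl x hx
    obtain ⟨hxi, hxl⟩ := hx
    by_cases hl : l < n
    · have hj : j < n := lt_of_le_of_lt hjl hl
      have hi : i < n := lt_of_le_of_lt (hij.trans hjl) hl
      simp only [hB', dif_pos hl, dif_pos hj, dif_pos hi] at *
      exact hdec.interp ⟨i, hi⟩ ⟨j, hj⟩ ⟨l, hl⟩ (Fin.mk_le_mk.mpr hij)
        (Fin.mk_le_mk.mpr hjl) ⟨hxi, hxl⟩
    · simp only [hB', dif_neg hl] at hxl
      exact absurd hxl (Set.notMem_empty x)
  have hB'card : ∀ i, (B' i).encard ≤ w + 1 := by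
    intro i
    by_cases hi : i < n
    · simpa only [hB', dif_pos hi] using hwid ⟨i, hi⟩
    · simp [hB', dif_neg hi]
  set D' : ℕ → Set V := fun k =>
    if k % 2 = 0 then B' (k / 2)
    else if ∃ u v, B' (k / 2) \ B' (k / 2 + 1) = {u} ∧
        B' (k / 2 + 1) \ B' (k / 2) = {v}
      then B' (k / 2) ∪ B' (k / 2 + 1) else B' (k / 2) ∩ B' (k / 2 + 1)
    with hD'
  have hmemD : ∀ k x, x ∈ D' k → ∃ p, x ∈ B' p ∧ k / 2 ≤ p ∧ p ≤ k / 2 + k % 2 := by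
    intro k x hx
    by_cases hk : k % 2 = 0
    · refine ⟨k / 2, ?_, le_refl _, Nat.le_add_right _ _⟩
      simpa only [hD', if_pos hk] using hx
    · simp only [hD', if_neg hk] at hx
      have h1 : k % 2 = 1 := Nat.mod_two_eq_zero_or_one k |>.resolve_left hk
      split_ifs at hx with hc
      · rcases hx with hx | hx
        · exact ⟨k / 2, hx, le_refl _, Nat.le_add_right _ _⟩
        · exact ⟨k / 2 + 1, hx, Nat.le_succ _, by omega⟩
      · exact ⟨k / 2, hx.1, le_refl _, Nat.le_add_right _ _⟩
  have hsubD : ∀ k, B' (k / 2) ∩ B' (k / 2 + k % 2) ⊆ D' k := by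
    intro k x hx
    by_cases hk : k % 2 = 0
    · simp only [hD', if_pos hk]
      exact hx.1
    · have h1 : k % 2 = 1 := Nat.mod_two_eq_zero_or_one k |>.resolve_left hk
      rw [h1] at hx
      simp only [hD', if_neg hk]
      split_ifs with hc
      · exact Or.inl hx.1
      · exact hx
  refine ⟨2 * n, fun k => D' k.1, ⟨?_, ?_, ?_⟩, ?_⟩
  · -- covers
    intro v
    obtain ⟨i, hi⟩ := hdec.covers v
    refine ⟨⟨2 * i.1, by omega⟩, ?_⟩
    have : (2 * i.1) % 2 = 0 := by omega
    simp only [hD', this, if_pos, Nat.mul_div_cancel_left _ (by norm_num : 0 < 2)]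
    simp only [hB', dif_pos i.2]
    exact hi
  · -- edges
    intro u v huv
    rcases hdec.edges u v huv with ⟨i, hu, hv⟩ | ⟨i, hi, hBu, hBv⟩
    · refine ⟨⟨2 * i.1, by omega⟩, ?_, ?_⟩ <;>
      · have h2 : (2 * i.1) % 2 = 0 := by omega
        simp only [hD', h2, if_pos, Nat.mul_div_cancel_left _ (by norm_num : 0 < 2)]
        simp only [hB', dif_pos i.2]
        first | exact hu | exact hv
    · -- pseudo edge at i
      have hilt : i.1 < n := i.2
      have hk : (2 * i.1 + 1) / 2 = i.1 := by omega
      have hkm : (2 * i.1 + 1) % 2 = 1 := by omega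
      have hBi : B' i.1 = B i := by simp only [hB', dif_pos hilt]
      have hBi1 : B' (i.1 + 1) = B ⟨i.1 + 1, hi⟩ := by simp only [hB', dif_pos hi]
      have hcond : ∃ u' v', B' ((2 * i.1 + 1) / 2) \ B' ((2 * i.1 + 1) / 2 + 1) = {u'} ∧
          B' ((2 * i.1 + 1) / 2 + 1) \ B' ((2 * i.1 + 1) / 2) = {v'} := by
        refine ⟨u, v, ?_, ?_⟩ <;> rw [hk, hBi, hBi1]
        · exact hBu
        · exact hBv
      refine ⟨⟨2 * i.1 + 1, by omega⟩, ?_, ?_⟩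
      · simp only [hD', if_neg (by omega : ¬ (2 * i.1 + 1) % 2 = 0), if_pos hcond]
        apply Set.mem_union_left
        rw [hk, hBi]
        have : u ∈ B i \ B ⟨i.1 + 1, hi⟩ := hBu ▸ rfl
        exact this.1
      · simp only [hD', if_neg (by omega : ¬ (2 * i.1 + 1) % 2 = 0), if_pos hcond]
        apply Set.mem_union_right
        rw [hk, hBi1]
        have : v ∈ B ⟨i.1 + 1, hi⟩ \ B i := hBv ▸ rfl
        exact this.1
  · -- interpolation
    intro a b c hab hbc x hx
    obtain ⟨hxa, hxc⟩ := hx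
    rcases eq_or_lt_of_le hab with h | hab'
    · exact h ▸ hxa
    rcases eq_or_lt_of_le hbc with h | hbc'
    · exact h ▸ hxc
    obtain ⟨p, hxp, _, hpu⟩ := hmemD a.1 x hxa
    obtain ⟨q, hxq, hql, _⟩ := hmemD c.1 x hxc
    have hab2 : a.1 < b.1 := hab'
    have hbc2 : b.1 < c.1 := hbc'
    have hp : p ≤ b.1 / 2 := by omega
    have hq : b.1 / 2 + b.1 % 2 ≤ q := by omega
    apply hsubD b.1
    exact ⟨hB'int p (b.1 / 2) q hp (le_trans (Nat.le_add_right _ _) hq) ⟨hxp, hxq⟩,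
      hB'int p (b.1 / 2 + b.1 % 2) q (by omega) hq ⟨hxp, hxq⟩⟩
  · -- width
    intro k
    by_cases hk : k.1 % 2 = 0
    · simp only [hD', if_pos hk]
      exact le_trans (hB'card _) (by gcongr <;> norm_num)
    · simp only [hD', if_neg hk]
      split_ifs with hc
      · obtain ⟨u, v, hu, hv⟩ := hc
        have hsub : B' (k.1 / 2) ∪ B' (k.1 / 2 + 1) ⊆ insert v (B' (k.1 / 2)) := by
          intro x hx
          rcases hx with hx | hx
          · exact Set.mem_insert_of_mem _ hx
          · by_cases hxm : x ∈ B' (k.1 / 2)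
            · exact Set.mem_insert_of_mem _ hxm
            · have : x ∈ B' (k.1 / 2 + 1) \ B' (k.1 / 2) := ⟨hx, hxm⟩
              rw [hv] at this
              exact this ▸ Set.mem_insert _ _
        calc (B' (k.1 / 2) ∪ B' (k.1 / 2 + 1)).encard
            ≤ (insert v (B' (k.1 / 2))).encard := Set.encard_mono hsub
          _ ≤ (B' (k.1 / 2)).encard + 1 := Set.encard_insert_le _ _
          _ ≤ (w + 1) + 1 := by exact add_le_add (hB'card _) (le_refl 1)
          _ = w + 2 := by push_cast; ring
      · exact le_trans (le_trans (Set.encard_mono Set.inter_subset_left)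
          (hB'card _)) (by gcongr <;> norm_num)
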